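/- The continuous map f : S² → Conf₃(S³) defined by f(ξ) = (j(q₁), j(q₂), j(6ξ)) is well defined (its values are triples of pairwise distinct points of S³) and is null-homotopic, i.e. homotopic to a constant map into Conf₃(S³). (This expresses that, after the inclusion of Conf₃(ℝ³) into Conf₃(S³), the sum of the second-homotopy classes β₃₁ + β₃₂ of the fiber spheres vanishes.) -/

import Mathlib

open Metric

noncomputable section

abbrev E3 : Type := EuclideanSpace ℝ (Fin 3)
abbrev E4 : Type := EuclideanSpace ℝ (Fin 4)

/-- `e = (1,0,0) ∈ ℝ³`. -/
def e : E3 := EuclideanSpace.single (0 : Fin 3) (1 : ℝ)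

def q1 : E3 := 0
def q2 : E3 := (4 : ℝ) • e
def q3 : E3 := (8 : ℝ) • e

/-- The unit sphere `S² ⊂ ℝ³`. -/
abbrev S2 : Type := sphere (0 : E3) 1

/-- The unit sphere `S³ ⊂ ℝ⁴`. -/
abbrev S3 : Type := sphere (0 : E4) 1

/-- Inverse stereographic projection `j : ℝ³ → ℝ⁴`, `j(x) = (2x, ‖x‖² − 1)/(‖x‖² + 1)`;
its image lies on the unit sphere `S³`, missing only the north pole `(0,0,0,1)`. -/
def jmap (x : E3) : E4 :=
  (WithLp.equiv 2 (Fin 4 → ℝ)).symm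
    ![2 * x 0 / (‖x‖ ^ 2 + 1), 2 * x 1 / (‖x‖ ^ 2 + 1), 2 * x 2 / (‖x‖ ^ 2 + 1),
      (‖x‖ ^ 2 - 1) / (‖x‖ ^ 2 + 1)]

/-- The configuration space `Conf₃(S³)` of 3 (ordered, pairwise distinct) points of `S³`,
with the subspace topology. -/
abbrev Conf3S : Type :=
  {p : S3 × S3 × S3 // p.1 ≠ p.2.1 ∧ p.1 ≠ p.2.2 ∧ p.2.1 ≠ p.2.2}

/-- The spherical cycle `ξ ↦ (j(q₁), j(q₂), j(6ξ))` is a well defined map `S² → Conf₃(S³)`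
and is null-homotopic: after inclusion into `Conf₃(S³)`, the class `β₃₁ + β₃₂` of the sum of
the fiber spheres vanishes in `π₂(Conf₃(S³))`. -/
def vmap (s : ℝ) (ξ : E3) : E4 :=
  (WithLp.equiv 2 (Fin 4 → ℝ)).symm
    ![12*(1-s)*ξ 0/37, 12*(1-s)*ξ 1/37, 12*(1-s)*ξ 2/37, (35+2*s)/37]

lemma vmap_apply (s : ℝ) (ξ : E3) (i : Fin 4) :
    vmap s ξ i = ![12*(1-s)*ξ 0/37, 12*(1-s)*ξ 1/37, 12*(1-s)*ξ 2/37, (35+2*s)/37] i := rfl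

lemma norm_sq_E4 (y : Fin 4 → ℝ) :
    ‖(WithLp.equiv 2 (Fin 4 → ℝ)).symm y‖^2 = y 0^2 + y 1^2 + y 2^2 + y 3^2 := by
  rw [EuclideanSpace.norm_eq, Real.sq_sqrt (by positivity)]
  simp [Fin.sum_univ_four, sq_abs, WithLp.equiv_symm_apply, WithLp.ofLp_toLp]

lemma norm_sq_E3 (ξ : E3) (hξ : ‖ξ‖ = 1) : ξ 0^2 + ξ 1^2 + ξ 2^2 = 1 := by
  have h := EuclideanSpace.norm_eq ξ
  rw [hξ] at h
  have := Real.sq_sqrt (show (0:ℝ) ≤ ∑ i, ‖ξ i‖^2 by positivity)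
  rw [← h] at this
  simpa [Fin.sum_univ_three, sq_abs] using this.symm

lemma norm_vmap_sq (s : ℝ) (ξ : E3) (hξ : ‖ξ‖ = 1) :
    ‖vmap s ξ‖^2 = ((12*(1-s))^2 + (35+2*s)^2)/37^2 := by
  have h3 := norm_sq_E3 ξ hξ
  rw [vmap, norm_sq_E4]
  simp only [Matrix.cons_val_zero, Matrix.cons_val_one, Matrix.head_cons,
    Matrix.cons_val_two, Matrix.tail_cons, Matrix.cons_val_three]
  field_simp
  nlinarith [h3]

lemma norm_vmap_pos (s : ℝ) (hs : 0 ≤ s) (ξ : E3) (hξ : ‖ξ‖ = 1) : 0 < ‖vmap s ξ‖ := by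
  have h := norm_vmap_sq s ξ hξ
  nlinarith [norm_nonneg (vmap s ξ)]

def Pmap (s : ℝ) (ξ : E3) : E4 := ‖vmap s ξ‖⁻¹ • vmap s ξ

lemma Pmap_norm (s : ℝ) (hs : 0 ≤ s) (ξ : E3) (hξ : ‖ξ‖ = 1) : ‖Pmap s ξ‖ = 1 := by
  have := norm_vmap_pos s hs ξ hξ
  exact norm_smul_inv_norm (𝕜 := ℝ) (norm_pos_iff.mp this)

lemma Pmap_three (s : ℝ) (ξ : E3) : Pmap s ξ 3 = ‖vmap s ξ‖⁻¹ * ((35+2*s)/37) := rfl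

lemma Pmap_three_gt (s : ℝ) (hs : 0 ≤ s) (hs1 : s ≤ 1) (ξ : E3) (hξ : ‖ξ‖ = 1) :
    15/17 < Pmap s ξ 3 := by
  have hn := norm_vmap_pos s hs ξ hξ
  have hsq := norm_vmap_sq s ξ hξ
  have key : 15 * ‖vmap s ξ‖ < 17 * ((35+2*s)/37) := by
    nlinarith [hn, hsq, sq_nonneg (15 * ‖vmap s ξ‖ - 17 * ((35+2*s)/37))]
  rw [Pmap_three, inv_mul_eq_div, lt_div_iff₀ hn]
  linarith

lemma Pmap_zero (ξ : E3) (hξ : ‖ξ‖ = 1) : Pmap 0 ξ = jmap ((6:ℝ) • ξ) := by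
  have hv : vmap 0 ξ = jmap ((6:ℝ) • ξ) := by
    have hn6 : ‖(6:ℝ) • ξ‖ = 6 := by
      rw [norm_smul, hξ]; simp
    ext i
    rw [vmap_apply]
    show _ = ![_,_,_,_] i
    have h0 : ((6:ℝ) • ξ) 0 = 6 * ξ 0 := rfl
    have h1 : ((6:ℝ) • ξ) 1 = 6 * ξ 1 := rfl
    have h2 : ((6:ℝ) • ξ) 2 = 6 * ξ 2 := rfl
    fin_cases i <;> simp [jmap, hn6, h0, h1, h2] <;> ring
  have hn : ‖vmap 0 ξ‖ = 1 := by
    have := norm_vmap_sq 0 ξ hξ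
    nlinarith [norm_nonneg (vmap 0 ξ)]
  rw [Pmap, hn, hv]; simp

def Npole : E4 := EuclideanSpace.single (3 : Fin 4) (1 : ℝ)

lemma Pmap_one (ξ : E3) : Pmap 1 ξ = Npole := by
  have hv : vmap 1 ξ = Npole := by
    ext i
    rw [vmap_apply]
    fin_cases i <;> simp [Npole, EuclideanSpace.single_apply] <;> norm_num
  have hn : ‖vmap 1 ξ‖ = 1 := by
    rw [hv, Npole, EuclideanSpace.norm_single]; norm_num
  rw [Pmap, hn, hv]; simp

lemma jmap_q1_apply : jmap q1 = (WithLp.equiv 2 (Fin 4 → ℝ)).symm ![0,0,0,-1] := by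
  have : ‖q1‖ = 0 := by simp [q1]
  ext i
  show ![_,_,_,_] i = ![_,_,_,_] i
  have h0 : q1 0 = 0 := rfl
  have h1 : q1 1 = 0 := rfl
  have h2 : q1 2 = 0 := rfl
  fin_cases i <;> simp [this, h0, h1, h2]

lemma jmap_q2_apply : jmap q2 = (WithLp.equiv 2 (Fin 4 → ℝ)).symm ![8/17,0,0,15/17] := by
  have hq2 : ‖q2‖ = 4 := by
    rw [q2, norm_smul, e, EuclideanSpace.norm_single]; norm_num
  have h0 : q2 0 = 4 := by simp [q2, e, EuclideanSpace.single_apply]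
  have h1 : q2 1 = 0 := by simp [q2, e, EuclideanSpace.single_apply]
  have h2 : q2 2 = 0 := by simp [q2, e, EuclideanSpace.single_apply]
  ext i
  show ![_,_,_,_] i = ![_,_,_,_] i
  fin_cases i <;> simp [hq2, h0, h1, h2] <;> norm_num

lemma jq1_3 : jmap q1 3 = -1 := by rw [jmap_q1_apply]; rfl
lemma jq2_3 : jmap q2 3 = 15/17 := by rw [jmap_q2_apply]; rfl
lemma Npole_3 : Npole 3 = 1 := by simp [Npole, EuclideanSpace.single_apply]

lemma ne_of_three {a b : E4} (h : a 3 ≠ b 3) : a ≠ b :=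
  fun hab => h (congrArg (fun x : E4 => x 3) hab)

lemma jmap_q1_mem : jmap q1 ∈ sphere (0:E4) 1 := by
  rw [mem_sphere_zero_iff_norm]
  have h := norm_sq_E4 ![0,0,0,-1]
  rw [← jmap_q1_apply] at h
  norm_num [Matrix.cons_val_zero, Matrix.cons_val_one, Matrix.head_cons,
    Matrix.cons_val_two, Matrix.tail_cons, Matrix.cons_val_three] at h
  rcases h with h | h
  · exact h
  · nlinarith [norm_nonneg (jmap q1)]

lemma jmap_q2_mem : jmap q2 ∈ sphere (0:E4) 1 := by
  rw [mem_sphere_zero_iff_norm]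
  have h := norm_sq_E4 ![8/17,0,0,15/17]
  rw [← jmap_q2_apply] at h
  norm_num [Matrix.cons_val_zero, Matrix.cons_val_one, Matrix.head_cons,
    Matrix.cons_val_two, Matrix.tail_cons, Matrix.cons_val_three] at h
  rcases h with h | h
  · exact h
  · nlinarith [norm_nonneg (jmap q2)]

lemma Npole_mem : Npole ∈ sphere (0:E4) 1 := by
  rw [mem_sphere_zero_iff_norm, Npole, EuclideanSpace.norm_single]; norm_num

def P1 : S3 := ⟨jmap q1, jmap_q1_mem⟩
def P2 : S3 := ⟨jmap q2, jmap_q2_mem⟩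

lemma snorm (ξ : S2) : ‖(ξ : E3)‖ = 1 := mem_sphere_zero_iff_norm.mp ξ.2

def Hfun (p : unitInterval × S2) : Conf3S :=
  ⟨(P1, P2, ⟨Pmap p.1 p.2,
      mem_sphere_zero_iff_norm.mpr (Pmap_norm p.1 p.1.2.1 p.2 (snorm p.2))⟩),
    by
      have hgt := Pmap_three_gt p.1 p.1.2.1 p.1.2.2 p.2 (snorm p.2)
      refine ⟨?_, ?_, ?_⟩
      · exact fun h => (show jmap q1 3 ≠ jmap q2 3 by
          rw [jq1_3, jq2_3]; norm_num) (congrArg (fun x : S3 => (x : E4) 3) h)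
      · exact fun h => (show jmap q1 3 ≠ Pmap p.1 p.2 3 by
          rw [jq1_3]; nlinarith) (congrArg (fun x : S3 => (x : E4) 3) h)
      · exact fun h => (show jmap q2 3 ≠ Pmap p.1 p.2 3 by
          rw [jq2_3]; nlinarith) (congrArg (fun x : S3 => (x : E4) 3) h)⟩

lemma hcoord (i : Fin 3) : Continuous fun p : unitInterval × S2 => (p.2 : E3) i :=
  (EuclideanSpace.proj i).continuous.comp (continuous_subtype_val.comp continuous_snd)

lemma hsc : Continuous fun p : unitInterval × S2 => (p.1 : ℝ) :=
  continuous_subtype_val.comp continuous_fst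

lemma hv_cont : Continuous fun p : unitInterval × S2 => vmap (p.1 : ℝ) (p.2 : E3) := by
  unfold vmap
  refine (PiLp.continuous_toLp 2 (fun _ : Fin 4 => ℝ)).comp ?_
  refine continuous_pi fun i => ?_
  fin_cases i <;>
    simp only [Matrix.cons_val_zero, Matrix.cons_val_one, Matrix.head_cons,
      Matrix.cons_val_two, Matrix.tail_cons, Matrix.cons_val_three, Fin.isValue]
  · exact ((continuous_const.mul (continuous_const.sub hsc)).mul (hcoord 0)).div_const 37
  · exact ((continuous_const.mul (continuous_const.sub hsc)).mul (hcoord 1)).div_const 37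
  · exact ((continuous_const.mul (continuous_const.sub hsc)).mul (hcoord 2)).div_const 37
  · exact (continuous_const.add (continuous_const.mul hsc)).div_const 37

lemma hP_cont : Continuous fun p : unitInterval × S2 => Pmap (p.1 : ℝ) (p.2 : E3) := by
  unfold Pmap
  exact (hv_cont.norm.inv₀ fun p =>
    (norm_vmap_pos p.1 p.1.2.1 p.2 (snorm p.2)).ne').smul hv_cont

lemma hH_cont : Continuous Hfun := by
  unfold Hfun
  exact Continuous.subtype_mk
    (continuous_const.prodMk (continuous_const.prodMk (hP_cont.subtype_mk _))) _

def Ypt : Conf3S :=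
  ⟨(P1, P2, ⟨Npole, Npole_mem⟩),
    ⟨fun h => (show jmap q1 3 ≠ jmap q2 3 by
        rw [jq1_3, jq2_3]; norm_num) (congrArg (fun x : S3 => (x : E4) 3) h),
     fun h => (show jmap q1 3 ≠ Npole 3 by
        rw [jq1_3, Npole_3]; norm_num) (congrArg (fun x : S3 => (x : E4) 3) h),
     fun h => (show jmap q2 3 ≠ Npole 3 by
        rw [jq2_3, Npole_3]; norm_num) (congrArg (fun x : S3 => (x : E4) 3) h)⟩⟩


theorem fiber_sum_nullhomotopic_in_conf3_sphere :
    ∃ f : C(S2, Conf3S),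
      (∀ ξ : S2,
        ((f ξ).1.1 : E4) = jmap q1 ∧
        ((f ξ).1.2.1 : E4) = jmap q2 ∧
        ((f ξ).1.2.2 : E4) = jmap ((6 : ℝ) • (ξ : E3))) ∧
      ∃ y : Conf3S, f.Homotopic (ContinuousMap.const _ y) := by

  refine ⟨⟨fun ξ => Hfun (0, ξ), hH_cont.comp (continuous_const.prodMk continuous_id)⟩,
    fun ξ => ⟨rfl, rfl, Pmap_zero ξ (snorm ξ)⟩, Ypt, ?_⟩
  exact ⟨{ toFun := fun p => Hfun p
           continuous_toFun := hH_cont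
           map_zero_left := fun ξ => rfl
           map_one_left := fun ξ =>
             Subtype.ext (Prod.ext rfl (Prod.ext rfl (Subtype.ext (Pmap_one ξ)))) }⟩
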